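/- (Local existence for the nonlinear heat equation, commutative case θ = 0.) Let d ≥ 1, let p ≥ 2 be an integer, let u_0 ∈ L²(ℝ^d), let T > 0, let h : (0,T] → ℝ be measurable, positive and bounded, and let A : L²(ℝ^d) → L^{2p}(ℝ^d) be a bounded linear operator. Then there exist T* ∈ (0,T] and a continuous function u : [0,T*] → L²(ℝ^d) such that for all t ∈ [0,T*], u(t) = u_0 + ∫_0^t h(s)·|A u(s)|^p ds, the integral being a Bochner integral in L²(ℝ^d). -/

import Mathlib

open MeasureTheory ENNReal

section Aux
lemma ptwise (p : ℕ) (hp : 1 ≤ p) (a b : ℝ) :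
    |(|a| ^ p - |b| ^ p)| ≤ p * (|a| + |b|) ^ (p - 1) * |a - b| := by
  set x := |a| with hxdef
  set y := |b| with hydef
  have hx : 0 ≤ x := abs_nonneg a
  have hy : 0 ≤ y := abs_nonneg b
  have key : x ^ p - y ^ p = (∑ i ∈ Finset.range p, x ^ i * y ^ (p - 1 - i)) * (x - y) :=
    (geom_sum₂_mul x y p).symm
  have hterm : ∀ i ∈ Finset.range p, x ^ i * y ^ (p - 1 - i) ≤ (x + y) ^ (p - 1) := by
    intro i hi
    simp only [Finset.mem_range] at hi
    calc x ^ i * y ^ (p - 1 - i) ≤ (x + y) ^ i * (x + y) ^ (p - 1 - i) := by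
          apply mul_le_mul (pow_le_pow_left₀ hx (le_add_of_nonneg_right hy) i)
            (pow_le_pow_left₀ hy (le_add_of_nonneg_left hx) _)
            (pow_nonneg hy _) (pow_nonneg (by positivity) _)
      _ = (x + y) ^ (p - 1) := by rw [← pow_add]; congr 1; omega
  have hsum : |∑ i ∈ Finset.range p, x ^ i * y ^ (p - 1 - i)| ≤ p * (x + y) ^ (p - 1) := by
    calc |∑ i ∈ Finset.range p, x ^ i * y ^ (p - 1 - i)|
        ≤ ∑ i ∈ Finset.range p, |x ^ i * y ^ (p - 1 - i)| := Finset.abs_sum_le_sum_abs _ _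
      _ ≤ ∑ _i ∈ Finset.range p, (x + y) ^ (p - 1) := by
          apply Finset.sum_le_sum
          intro i hi
          rw [abs_of_nonneg (by positivity)]
          exact hterm i hi
      _ = p * (x + y) ^ (p - 1) := by simp [Finset.sum_const, nsmul_eq_mul]
  calc |x ^ p - y ^ p| = |∑ i ∈ Finset.range p, x ^ i * y ^ (p - 1 - i)| * |x - y| := by
        rw [key, abs_mul]
    _ ≤ (p * (x + y) ^ (p - 1)) * |a - b| := by
        apply mul_le_mul hsum ?_ (abs_nonneg _) (by positivity)
        exact abs_abs_sub_abs_le_abs_sub a b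
    _ = p * (x + y) ^ (p - 1) * |a - b| := rfl

variable {α : Type*} [MeasurableSpace α] {μ : Measure α}

lemma eLp_pow (p : ℕ) (hp : 1 ≤ p) (f : α → ℝ) :
    eLpNorm (fun x => |f x| ^ p) 2 μ = eLpNorm f (2 * p) μ ^ (p : ℝ) := by
  have h1 : (fun x => |f x| ^ p) = fun x => ‖f x‖ ^ (p : ℝ) := by
    funext x; rw [Real.norm_eq_abs, Real.rpow_natCast]
  rw [h1, eLpNorm_norm_rpow f (by positivity : (0:ℝ) < (p:ℝ))]
  congr 2
  rw [ENNReal.ofReal_natCast]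

lemma keyIneq (p : ℕ) (hp : 2 ≤ p) (f g : α → ℝ)
    (hf : AEStronglyMeasurable f μ) (hg : AEStronglyMeasurable g μ) :
    eLpNorm (fun x => |f x| ^ p - |g x| ^ p) 2 μ ≤
      p * (eLpNorm f (2 * p) μ + eLpNorm g (2 * p) μ) ^ (p - 1) *
        eLpNorm (f - g) (2 * p) μ := by
  have hp1 : 1 ≤ p := le_trans one_le_two hp
  have hpm0 : ((p - 1 : ℕ) : ℝ≥0∞) ≠ 0 := by
    simp only [ne_eq, Nat.cast_eq_zero]; omega
  have hpmtop : ((p - 1 : ℕ) : ℝ≥0∞) ≠ ⊤ := natCast_ne_top _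
  have hq0 : ((2 : ℝ≥0∞) * p) ≠ 0 := by
    simp only [ne_eq, mul_eq_zero, Nat.cast_eq_zero]; push_neg; exact ⟨two_ne_zero, by omega⟩
  have hqtop : ((2 : ℝ≥0∞) * p) ≠ ⊤ := ENNReal.mul_ne_top ofNat_ne_top (natCast_ne_top _)
  set r : ℝ≥0∞ := (2 * p : ℝ≥0∞) / ((p - 1 : ℕ) : ℝ≥0∞) with hr
  have hpqr : (1 : ℝ≥0∞) / 2 = 1 / r + 1 / (2 * p) := by
    rw [hr, one_div ((2 * (p:ℝ≥0∞)) / _), ENNReal.inv_div (Or.inl hpmtop) (Or.inl hpm0),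
      ENNReal.div_add_div_same]
    have h2 : ((p - 1 : ℕ) : ℝ≥0∞) + 1 = p := by
      exact_mod_cast Nat.sub_add_cancel hp1
    rw [h2, mul_comm (2 : ℝ≥0∞) (p : ℝ≥0∞),
      show (p : ℝ≥0∞) = p * 1 from (mul_one _).symm, mul_assoc, one_mul]
    exact (ENNReal.mul_div_mul_left 1 2 (by simpa using (by omega : p ≠ 0)) (natCast_ne_top _)).symm
  have h1le : (1 : ℝ≥0∞) ≤ 2 * p := by
    calc (1 : ℝ≥0∞) ≤ 2 := one_le_two
      _ ≤ 2 * p := le_mul_of_one_le_right zero_le (by exact_mod_cast hp1)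
  have hfa : AEStronglyMeasurable (fun x => |f x|) μ := by
    simpa [Real.norm_eq_abs] using hf.norm
  have hga : AEStronglyMeasurable (fun x => |g x|) μ := by
    simpa [Real.norm_eq_abs] using hg.norm
  set Ffun : α → ℝ := fun x => |f x - g x| with hF
  set φfun : α → ℝ := fun x => (|f x| + |g x|) ^ (p - 1) with hφdef
  set Gfun : α → ℝ := φfun • Ffun with hG
  have hGfun : ∀ x, Gfun x = (|f x| + |g x|) ^ (p - 1) * |f x - g x| := fun x => rfl
  have hfg : AEStronglyMeasurable Ffun μ := by
    simpa [hF, Real.norm_eq_abs] using (hf.sub hg).norm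
  have hφ : AEStronglyMeasurable φfun μ :=
    ((hfa.add hga).aemeasurable.pow_const (p - 1)).aestronglyMeasurable
  have step1 : eLpNorm (fun x => |f x| ^ p - |g x| ^ p) 2 μ ≤
      eLpNorm ((p : ℝ) • Gfun) 2 μ := by
    apply eLpNorm_mono
    intro x
    rw [Real.norm_eq_abs, Real.norm_eq_abs]
    refine le_trans ?_ (le_abs_self _)
    calc |(|f x| ^ p - |g x| ^ p)| ≤ p * (|f x| + |g x|) ^ (p - 1) * |f x - g x| :=
        ptwise p hp1 (f x) (g x)
      _ = ((p : ℝ) • Gfun) x := by simp [hGfun, smul_eq_mul]; ring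
  have step2 : eLpNorm ((p : ℝ) • Gfun) 2 μ = (p : ℝ≥0∞) * eLpNorm Gfun 2 μ := by
    rw [eLpNorm_const_smul]
    simp [ENNReal.smul_def]
  have step3 : eLpNorm Gfun 2 μ ≤ eLpNorm φfun r μ * eLpNorm Ffun (2 * p) μ :=
    eLpNorm_smul_le_mul_eLpNorm hfg hφ (hpqr := ⟨by simpa only [one_div] using hpqr.symm⟩)
  have step4 : eLpNorm φfun r μ =
      eLpNorm (fun x => |f x| + |g x|) (2 * p) μ ^ ((p - 1 : ℕ) : ℝ) := by
    have h1 : φfun = fun x => ‖|f x| + |g x|‖ ^ (((p - 1 : ℕ) : ℝ)) := by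
      funext x
      rw [Real.norm_eq_abs, abs_of_nonneg (by positivity), Real.rpow_natCast]
    rw [h1, eLpNorm_norm_rpow _ (by
      have h3 : 1 ≤ p - 1 := by omega
      positivity)]
    congr 1
    rw [ENNReal.ofReal_natCast, hr, ENNReal.div_mul_cancel hpm0 hpmtop]
  have step5 : eLpNorm (fun x => |f x| + |g x|) (2 * p) μ ≤
      eLpNorm f (2 * p) μ + eLpNorm g (2 * p) μ := by
    have habs : eLpNorm (fun x => |f x|) (2 * p) μ = eLpNorm f (2 * p) μ := by
      rw [← eLpNorm_norm f]; simp [Real.norm_eq_abs]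
    have hgabs : eLpNorm (fun x => |g x|) (2 * p) μ = eLpNorm g (2 * p) μ := by
      rw [← eLpNorm_norm g]; simp [Real.norm_eq_abs]
    calc eLpNorm (fun x => |f x| + |g x|) (2 * p) μ
        ≤ eLpNorm (fun x => |f x|) (2 * p) μ + eLpNorm (fun x => |g x|) (2 * p) μ :=
          eLpNorm_add_le hfa hga h1le
      _ = _ := by rw [habs, hgabs]
  have step6 : eLpNorm Ffun (2 * p) μ = eLpNorm (f - g) (2 * p) μ := by
    rw [← eLpNorm_norm (f - g)]; congr 1
  calc eLpNorm (fun x => |f x| ^ p - |g x| ^ p) 2 μ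
      ≤ (p : ℝ≥0∞) * eLpNorm Gfun 2 μ := by rw [← step2]; exact step1
    _ ≤ (p : ℝ≥0∞) * (eLpNorm φfun r μ * eLpNorm Ffun (2 * p) μ) := _root_.mul_le_mul_right step3 _
    _ ≤ p * (eLpNorm f (2 * p) μ + eLpNorm g (2 * p) μ) ^ (p - 1) *
        eLpNorm (f - g) (2 * p) μ := by
        rw [step4, step6, ← mul_assoc]
        apply _root_.mul_le_mul_left
        apply _root_.mul_le_mul_right
        rw [← ENNReal.rpow_natCast _ (p - 1)]
        exact ENNReal.rpow_le_rpow step5 (by positivity)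


section LpLevel
variable {α : Type*} [MeasurableSpace α] {μ : Measure α} (p : ℕ)
variable [Fact ((1:ℝ≥0∞) ≤ 2 * p)]
variable (NN : Lp ℝ (2 * p) μ → Lp ℝ 2 μ)
variable (hNN : ∀ w, (NN w : α → ℝ) =ᵐ[μ] fun x => |w x| ^ p)

include hNN in
lemma N_norm_eq (hp : 1 ≤ p) (w : Lp ℝ (2 * p) μ) : ‖NN w‖ = ‖w‖ ^ p := by
  rw [Lp.norm_def, eLpNorm_congr_ae (hNN w), eLp_pow p hp, Lp.norm_def,
    ← ENNReal.toReal_rpow, Real.rpow_natCast]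

include hNN in
lemma N_lip (hp : 2 ≤ p) (w v : Lp ℝ (2 * p) μ) :
    ‖NN w - NN v‖ ≤ p * (‖w‖ + ‖v‖) ^ (p - 1) * ‖w - v‖ := by
  have h1 : ⇑(NN w - NN v) =ᵐ[μ] fun x => |w x| ^ p - |v x| ^ p :=
    (Lp.coeFn_sub _ _).trans ((hNN w).sub (hNN v))
  have key := keyIneq p hp ⇑w ⇑v (Lp.aestronglyMeasurable w) (Lp.aestronglyMeasurable v)
  have hwv : eLpNorm (⇑w - ⇑v) (2 * p) μ = eLpNorm (⇑(w - v)) (2 * p) μ :=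
    (eLpNorm_congr_ae (Lp.coeFn_sub w v)).symm
  rw [hwv] at key
  have hfin : (p : ℝ≥0∞) * (eLpNorm (⇑w) (2 * p) μ + eLpNorm (⇑v) (2 * p) μ) ^ (p - 1) *
      eLpNorm (⇑(w - v)) (2 * p) μ ≠ ⊤ := by
    apply ENNReal.mul_ne_top
    apply ENNReal.mul_ne_top (natCast_ne_top p)
    · exact ENNReal.pow_ne_top (by
        exact ENNReal.add_ne_top.mpr ⟨Lp.eLpNorm_ne_top w, Lp.eLpNorm_ne_top v⟩)
    · exact Lp.eLpNorm_ne_top (w - v)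
  calc ‖NN w - NN v‖ = (eLpNorm (fun x => |w x| ^ p - |v x| ^ p) 2 μ).toReal := by
        rw [Lp.norm_def, eLpNorm_congr_ae h1]
    _ ≤ ((p : ℝ≥0∞) * (eLpNorm (⇑w) (2 * p) μ + eLpNorm (⇑v) (2 * p) μ) ^ (p - 1) *
        eLpNorm (⇑(w - v)) (2 * p) μ).toReal := ENNReal.toReal_mono hfin key
    _ = p * (‖w‖ + ‖v‖) ^ (p - 1) * ‖w - v‖ := by
        rw [ENNReal.toReal_mul, ENNReal.toReal_mul, ENNReal.toReal_pow, ENNReal.toReal_add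
          (Lp.eLpNorm_ne_top w) (Lp.eLpNorm_ne_top v), ENNReal.toReal_natCast,
          Lp.norm_def, Lp.norm_def, Lp.norm_def]

end LpLevel
end Aux

set_option maxHeartbeats 4000000 in
set_option synthInstance.maxHeartbeats 1000000 in
theorem stmt13 (d : ℕ) (hd : 1 ≤ d) (p : ℕ) (hp : 2 ≤ p)
    [Fact ((1 : ℝ≥0∞) ≤ 2 * p)]
    (u₀ : Lp ℝ 2 (volume : Measure (EuclideanSpace ℝ (Fin d))))
    (T : ℝ) (hT : 0 < T)
    (h : ℝ → ℝ) (hmeas : Measurable h)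
    (hpos : ∀ s ∈ Set.Ioc (0 : ℝ) T, 0 < h s)
    (hbdd : ∃ M : ℝ, ∀ s ∈ Set.Ioc (0 : ℝ) T, h s ≤ M)
    (A : Lp ℝ 2 (volume : Measure (EuclideanSpace ℝ (Fin d))) →L[ℝ]
         Lp ℝ (2 * p) (volume : Measure (EuclideanSpace ℝ (Fin d))))
    -- `N w` realizes `|w|^p` as an element of `L²(ℝ^d)`
    (N : Lp ℝ (2 * p) (volume : Measure (EuclideanSpace ℝ (Fin d))) →
         Lp ℝ 2 (volume : Measure (EuclideanSpace ℝ (Fin d))))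
    (hN : ∀ w, (N w : EuclideanSpace ℝ (Fin d) → ℝ) =ᵐ[volume] fun x => |w x| ^ p) :
    ∃ Tstar ∈ Set.Ioc (0 : ℝ) T,
      ∃ u : ℝ → Lp ℝ 2 (volume : Measure (EuclideanSpace ℝ (Fin d))),
        ContinuousOn u (Set.Icc 0 Tstar) ∧
        ∀ t ∈ Set.Icc (0 : ℝ) Tstar,
          u t = u₀ + ∫ s in (0 : ℝ)..t, h s • N (A (u s)) := by
  classical
  obtain ⟨M, hM⟩ := hbdd
  have hp1 : 1 ≤ p := by omega
  have hMpos : 0 < M := lt_of_lt_of_le (hpos T ⟨hT, le_rfl⟩) (hM T ⟨hT, le_rfl⟩)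
  have E_def : True := trivial
  set R : ℝ := ‖A‖ * (‖u₀‖ + 1) with hRdef
  have hR0 : 0 ≤ R := by positivity
  set C0 : ℝ := R ^ p with hC0def
  have hC00 : 0 ≤ C0 := by positivity
  set L : ℝ := p * (2 * R) ^ (p - 1) * ‖A‖ with hLdef
  have hL0 : 0 ≤ L := by positivity
  have hball_norm : ∀ v ∈ Metric.closedBall u₀ 1, ‖v‖ ≤ ‖u₀‖ + 1 := by
    intro v hv
    have h1 : ‖v - u₀‖ ≤ 1 := by
      rw [← dist_eq_norm]; exact Metric.mem_closedBall.mp hv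
    have h2 := norm_sub_norm_le v u₀
    linarith
  have hAv : ∀ v ∈ Metric.closedBall u₀ 1, ‖A v‖ ≤ R := by
    intro v hv
    calc ‖A v‖ ≤ ‖A‖ * ‖v‖ := A.le_opNorm v
      _ ≤ ‖A‖ * (‖u₀‖ + 1) := by
          exact mul_le_mul_of_nonneg_left (hball_norm v hv) (norm_nonneg A)
  have hFbound : ∀ v ∈ Metric.closedBall u₀ 1, ‖N (A v)‖ ≤ C0 := by
    intro v hv
    rw [N_norm_eq p N hN hp1 (A v)]
    exact pow_le_pow_left₀ (norm_nonneg _) (hAv v hv) p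
  have hFlip : ∀ x ∈ Metric.closedBall u₀ 1, ∀ y ∈ Metric.closedBall u₀ 1,
      ‖N (A x) - N (A y)‖ ≤ L * ‖x - y‖ := by
    intro x hx y hy
    calc ‖N (A x) - N (A y)‖ ≤ p * (‖A x‖ + ‖A y‖) ^ (p - 1) * ‖A x - A y‖ :=
        N_lip p N hN hp (A x) (A y)
      _ ≤ p * (2 * R) ^ (p - 1) * (‖A‖ * ‖x - y‖) := by
          apply mul_le_mul
          · apply mul_le_mul_of_nonneg_left _ (by positivity : (0:ℝ) ≤ (p:ℝ))
            apply pow_le_pow_left₀ (by positivity)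
            have := hAv x hx; have := hAv y hy; linarith
          · rw [← map_sub]; exact A.le_opNorm _
          · exact norm_nonneg _
          · positivity
      _ = L * ‖x - y‖ := by rw [hLdef]; ring
  set Tstar := min T (min (1 / (M * C0 + 1)) (1 / (2 * M * (L + 1)))) with hTsdef
  have hTs0 : 0 < Tstar := lt_min hT (lt_min (by positivity) (by positivity))
  have hTsT : Tstar ≤ T := min_le_left _ _
  have hTs1 : Tstar ≤ 1 / (M * C0 + 1) := le_trans (min_le_right _ _) (min_le_left _ _)
  have hTs2 : Tstar ≤ 1 / (2 * M * (L + 1)) := le_trans (min_le_right _ _) (min_le_right _ _)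
  have hb1 : M * C0 * Tstar ≤ 1 := by
    have h1 : Tstar * (M * C0 + 1) ≤ 1 := (le_div_iff₀ (by positivity)).mp hTs1
    nlinarith [hTs0.le, hC00, hMpos.le]
  have hb2 : M * L * Tstar ≤ 1 / 2 := by
    have h1 : Tstar * (2 * M * (L + 1)) ≤ 1 := (le_div_iff₀ (by positivity)).mp hTs2
    nlinarith [hTs0.le, hL0, hMpos.le]
  refine ⟨Tstar, ⟨hTs0, hTsT⟩, ?_⟩
  set I := Set.Icc (0:ℝ) Tstar with hI
  set K : Set C(I, Lp ℝ 2 (volume : Measure (EuclideanSpace ℝ (Fin d)))) := {f | ∀ t, f t ∈ Metric.closedBall u₀ 1} with hKdef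
  haveI hKne : Nonempty K :=
    ⟨⟨ContinuousMap.const I u₀, fun t => Metric.mem_closedBall_self zero_le_one⟩⟩
  have hKclosed : IsClosed K := by
    have hKeq : K = ⋂ t : I, (fun f : C(I, Lp ℝ 2 (volume : Measure (EuclideanSpace ℝ (Fin d)))) => f t) ⁻¹' Metric.closedBall u₀ 1 := by
      ext f; simp [hKdef, Set.mem_iInter]
    rw [hKeq]
    exact isClosed_iInter fun t =>
      Metric.isClosed_closedBall.preimage (continuous_eval_const t)
  haveI : CompleteSpace K := hKclosed.completeSpace_coe
  set Ufun : K → ℝ → Lp ℝ 2 (volume : Measure (EuclideanSpace ℝ (Fin d))) := fun u s => (u : C(I, Lp ℝ 2 (volume : Measure (EuclideanSpace ℝ (Fin d))))) (Set.projIcc 0 Tstar hTs0.le s) with hUdef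
  have hUcont : ∀ u : K, Continuous (Ufun u) := fun u =>
    (map_continuous (u : C(I, Lp ℝ 2 (volume : Measure (EuclideanSpace ℝ (Fin d)))))).comp continuous_projIcc
  have hUball : ∀ (u : K) (s : ℝ), Ufun u s ∈ Metric.closedBall u₀ 1 := fun u s => u.2 _
  have hNAlip : LipschitzOnWith L.toNNReal (fun v : Lp ℝ 2 (volume : Measure (EuclideanSpace ℝ (Fin d))) => N (A v)) (Metric.closedBall u₀ 1) := by
    apply LipschitzOnWith.of_dist_le_mul
    intro x hx y hy
    rw [dist_eq_norm, dist_eq_norm]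
    calc ‖N (A x) - N (A y)‖ ≤ L * ‖x - y‖ := hFlip x hx y hy
      _ = L.toNNReal * ‖x - y‖ := by rw [Real.coe_toNNReal L hL0]
  have hNAcont : ∀ u : K, Continuous (fun s : ℝ => N (A (Ufun u s))) := fun u =>
    hNAlip.continuousOn.comp_continuous (hUcont u) (fun s => hUball u s)
  set g : K → ℝ → Lp ℝ 2 (volume : Measure (EuclideanSpace ℝ (Fin d))) := fun u s => h s • N (A (Ufun u s)) with hgdef
  have hgmeas : ∀ u : K, AEStronglyMeasurable (g u) volume := fun u =>
    (hmeas.aestronglyMeasurable).smul (hNAcont u).aestronglyMeasurable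
  have hgbound : ∀ (u : K), ∀ s ∈ Set.Ioc (0:ℝ) Tstar, ‖g u s‖ ≤ M * C0 := by
    intro u s hs
    have hsT : s ∈ Set.Ioc (0:ℝ) T := ⟨hs.1, le_trans hs.2 hTsT⟩
    rw [hgdef]
    simp only [norm_smul, Real.norm_eq_abs]
    rw [abs_of_pos (hpos s hsT)]
    exact mul_le_mul (hM s hsT) (hFbound _ (hUball u s)) (norm_nonneg _) hMpos.le
  have hgint : ∀ u : K, IntegrableOn (g u) (Set.Icc 0 Tstar) volume := by
    intro u
    rw [integrableOn_Icc_iff_integrableOn_Ioc]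
    refine Integrable.mono' (g := fun _ => M * C0)
      (integrableOn_const measure_Ioc_lt_top.ne) ((hgmeas u).restrict) ?_
    rw [ae_restrict_iff' measurableSet_Ioc]
    exact Filter.Eventually.of_forall (hgbound u)
  have hgii : ∀ (u : K), ∀ t ∈ I, IntervalIntegrable (g u) volume 0 t := by
    intro u t ht
    apply IntegrableOn.intervalIntegrable
    rw [Set.uIcc_of_le ht.1]
    exact (hgint u).mono_set (Set.Icc_subset_Icc le_rfl ht.2)
  have hgiiI : ∀ (u : K) (t : I), IntervalIntegrable (g u) volume 0 t :=
    fun u t => hgii u t t.2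
  -- the map Φ
  set Φfun : K → C(I, Lp ℝ 2 (volume : Measure (EuclideanSpace ℝ (Fin d)))) := fun u =>
    ⟨fun t => u₀ + ∫ s in (0:ℝ)..(t:ℝ), g u s, by
      have hcont := intervalIntegral.continuousOn_primitive_interval
        (f := g u) (μ := volume) (a := (0:ℝ)) (b := Tstar)
        (by rw [Set.uIcc_of_le hTs0.le]; exact hgint u)
      refine continuous_const.add (hcont.comp_continuous continuous_subtype_val ?_)
      intro t; rw [Set.uIcc_of_le hTs0.le]; exact t.2⟩ with hΦdef
  have hΦval : ∀ (u : K) (t : I), Φfun u t = u₀ + ∫ s in (0:ℝ)..(t:ℝ), g u s := fun u t => rfl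
  have hΦmem : ∀ u : K, Φfun u ∈ K := by
    intro u t
    rw [Metric.mem_closedBall, dist_eq_norm, hΦval, add_sub_cancel_left]
    have hb : ∀ x ∈ Set.uIoc (0:ℝ) (t:ℝ), ‖g u x‖ ≤ M * C0 := by
      intro x hx
      rw [Set.uIoc_of_le t.2.1] at hx
      exact hgbound u x ⟨hx.1, le_trans hx.2 t.2.2⟩
    calc ‖∫ s in (0:ℝ)..(t:ℝ), g u s‖ ≤ M * C0 * |(t:ℝ) - 0| :=
        intervalIntegral.norm_integral_le_of_norm_le_const hb
      _ = M * C0 * (t:ℝ) := by rw [sub_zero, abs_of_nonneg t.2.1]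
      _ ≤ M * C0 * Tstar := by
          exact mul_le_mul_of_nonneg_left t.2.2 (by positivity)
      _ ≤ 1 := hb1
  set Φ : K → K := fun u => ⟨Φfun u, hΦmem u⟩ with hΦ2
  have hdistU : ∀ (u v : K) (s : ℝ), dist (Ufun u s) (Ufun v s) ≤ dist u v := by
    intro u v s
    rw [Subtype.dist_eq]
    exact ContinuousMap.dist_apply_le_dist _
  have hgdist : ∀ (u v : K) (s : ℝ), s ∈ Set.Ioc (0:ℝ) Tstar →
      ‖g u s - g v s‖ ≤ M * L * dist u v := by
    intro u v s hs
    have hsT : s ∈ Set.Ioc (0:ℝ) T := ⟨hs.1, le_trans hs.2 hTsT⟩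
    rw [hgdef]
    simp only
    rw [← smul_sub, norm_smul, Real.norm_eq_abs, abs_of_pos (hpos s hsT)]
    have h2 : ‖N (A (Ufun u s)) - N (A (Ufun v s))‖ ≤ L * dist u v := by
      calc ‖N (A (Ufun u s)) - N (A (Ufun v s))‖ ≤ L * ‖Ufun u s - Ufun v s‖ :=
          hFlip _ (hUball u s) _ (hUball v s)
        _ = L * dist (Ufun u s) (Ufun v s) := by rw [dist_eq_norm]
        _ ≤ L * dist u v := mul_le_mul_of_nonneg_left (hdistU u v s) hL0
    calc h s * ‖N (A (Ufun u s)) - N (A (Ufun v s))‖ ≤ M * (L * dist u v) :=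
        mul_le_mul (hM s hsT) h2 (norm_nonneg _) hMpos.le
      _ = M * L * dist u v := by ring
  have hΦlip : LipschitzWith (1/2 : NNReal) Φ := by
    apply LipschitzWith.of_dist_le_mul
    intro u v
    rw [Subtype.dist_eq]
    have hval : ∀ t : I, dist (Φfun u t) (Φfun v t) ≤ 1/2 * dist u v := by
      intro t
      rw [hΦval, hΦval, dist_eq_norm, add_sub_add_left_eq_sub,
        ← intervalIntegral.integral_sub (hgiiI u t) (hgiiI v t)]
      have hb : ∀ x ∈ Set.uIoc (0:ℝ) (t:ℝ), ‖g u x - g v x‖ ≤ M * L * dist u v := by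
        intro x hx
        rw [Set.uIoc_of_le t.2.1] at hx
        exact hgdist u v x ⟨hx.1, le_trans hx.2 t.2.2⟩
      calc ‖∫ s in (0:ℝ)..(t:ℝ), (g u s - g v s)‖ ≤ M * L * dist u v * |(t:ℝ) - 0| :=
          intervalIntegral.norm_integral_le_of_norm_le_const hb
        _ ≤ M * L * dist u v * Tstar := by
            rw [sub_zero, abs_of_nonneg t.2.1]
            exact mul_le_mul_of_nonneg_left t.2.2 (by positivity)
        _ ≤ 1/2 * dist u v := by nlinarith [dist_nonneg (x := u) (y := v), hb2]
    have hfinal : dist (Φfun u) (Φfun v) ≤ 1/2 * dist u v :=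
      (ContinuousMap.dist_le (by positivity)).mpr hval
    have hco : ((1/2 : NNReal) : ℝ) = 1/2 := by norm_num
    rw [hco]
    exact hfinal
  have hcontract : ContractingWith (1/2 : NNReal) Φ :=
    ⟨by rw [← NNReal.coe_lt_coe]; push_cast; norm_num, hΦlip⟩
  set w : K := ContractingWith.fixedPoint Φ hcontract with hwdef
  have hfix : Φ w = w := hcontract.fixedPoint_isFixedPt
  refine ⟨Ufun w, (hUcont w).continuousOn, ?_⟩
  intro t ht
  have h1 : Ufun w t = (w : C(I, Lp ℝ 2 (volume : Measure (EuclideanSpace ℝ (Fin d))))) ⟨t, ht⟩ := by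
    rw [hUdef]; simp only; congr 1; exact Set.projIcc_of_mem hTs0.le ht
  have h2 : (w : C(I, Lp ℝ 2 (volume : Measure (EuclideanSpace ℝ (Fin d))))) ⟨t, ht⟩ = u₀ + ∫ s in (0:ℝ)..t, g w s := by
    conv_lhs => rw [← hfix]
    exact hΦval w ⟨t, ht⟩
  rw [h1, h2]
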